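/- Let p and t be probability distributions on a countable set such that p_i > 0 implies t_i > 0, and let r = sup_{i : p_i > 0} p_i / t_i. If r > 1, then the informational divergence satisfies D(p‖t) ≤ (1/2) · (r log r / (r − 1)) · ‖p − t‖₁ (if r = 1 then p = t and D(p‖t) = 0 = ‖p − t‖₁). -/

import Mathlib

/-- Informational divergence `D(p‖t) = Σ_{i : p_i > 0} p_i log(p_i / t_i)` (natural log). -/
noncomputable def kl (p t : ℕ → ℝ) : ℝ :=
  ∑' i, if 0 < p i then p i * Real.log (p i / t i) else 0

/-- Variational distance `‖p − t‖₁ = Σ_i |p_i − t_i|`. -/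
noncomputable def vd (p t : ℕ → ℝ) : ℝ := ∑' i, |p i - t i|

/-- A probability distribution on the countable set ℕ. -/
def IsDistrib (p : ℕ → ℝ) : Prop := (∀ i, 0 ≤ p i) ∧ HasSum p 1

/-- Chord inequality for the convex function `x ↦ x log x` on `[1, r]`. -/
lemma chord_ineq {r x : ℝ} (hr1 : 1 < r) (hx1 : 1 ≤ x) (hxr : x ≤ r) :
    x * Real.log x ≤ r * Real.log r / (r - 1) * (x - 1) := by
  have hr0 : (0:ℝ) < r - 1 := by linarith
  set a : ℝ := (r - x) / (r - 1) with ha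
  set b : ℝ := (x - 1) / (r - 1) with hb
  have ha0 : 0 ≤ a := div_nonneg (by linarith) (by linarith)
  have hb0 : 0 ≤ b := div_nonneg (by linarith) (by linarith)
  have hab : a + b = 1 := by
    rw [ha, hb, ← add_div, div_eq_one_iff_eq hr0.ne']; ring
  have hx : a * 1 + b * r = x := by
    rw [ha, hb, mul_one, div_mul_eq_mul_div, ← add_div, div_eq_iff hr0.ne']; ring
  have := Real.convexOn_mul_log.2 (Set.mem_Ici.mpr (zero_le_one)) 
    (Set.mem_Ici.mpr (by linarith : (0:ℝ) ≤ r)) ha0 hb0 hab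
  rw [smul_eq_mul, smul_eq_mul, smul_eq_mul, smul_eq_mul, hx] at this
  simp only [Real.log_one, mul_zero, zero_add] at this
  calc x * Real.log x ≤ b * (r * Real.log r) := this
    _ = r * Real.log r / (r - 1) * (x - 1) := by rw [hb]; ring

theorem stmt0 (p t : ℕ → ℝ) (hp : IsDistrib p) (ht : IsDistrib t)
    (habs : ∀ i, 0 < p i → 0 < t i) (r : ℝ)
    (hr : IsLUB {x : ℝ | ∃ i, 0 < p i ∧ x = p i / t i} r) (hr1 : 1 < r) :
    kl p t ≤ (1 / 2) * (r * Real.log r / (r - 1)) * vd p t := by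
  set C : ℝ := r * Real.log r / (r - 1) with hC
  have hC0 : 0 ≤ C := by
    apply div_nonneg _ (by linarith)
    exact mul_nonneg (by linarith) (Real.log_nonneg hr1.le)
  set f : ℕ → ℝ := fun i => if 0 < p i then p i * Real.log (p i / t i) else 0 with hf
  set g : ℕ → ℝ := fun i => max (p i - t i) 0 with hg
  -- pointwise upper bound
  have hfg : ∀ i, f i ≤ C * g i := by
    intro i
    simp only [hf, hg]
    by_cases hpi : 0 < p i
    · simp only [if_pos hpi]
      have hti := habs i hpi
      set x : ℝ := p i / t i with hx
      have hx0 : 0 < x := div_pos hpi hti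
      have hxr : x ≤ r := hr.1 ⟨i, hpi, rfl⟩
      have key : p i * Real.log x ≤ C * (p i - t i) ∨
          p i * Real.log x ≤ 0 := by
        rcases le_or_gt x 1 with h1 | h1
        · right
          exact mul_nonpos_of_nonneg_of_nonpos hpi.le (Real.log_nonpos hx0.le h1)
        · left
          have := chord_ineq hr1 h1.le hxr
          have h2 : t i * (x * Real.log x) ≤ t i * (C * (x - 1)) :=
            mul_le_mul_of_nonneg_left this hti.le
          have e1 : t i * (x * Real.log x) = p i * Real.log x := by
            rw [← mul_assoc, hx, mul_div_cancel₀ _ hti.ne']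
          have e2 : t i * (C * (x - 1)) = C * (p i - t i) := by
            rw [hx]; field_simp
          rw [e1, e2] at h2; exact h2
      rcases key with h | h
      · exact h.trans (mul_le_mul_of_nonneg_left (le_max_left _ _) hC0)
      · exact h.trans (mul_nonneg hC0 (le_max_right _ _))
    · simp only [if_neg hpi]
      exact mul_nonneg hC0 (le_max_right _ _)
  -- pointwise lower bound: f i ≥ p i - t i
  have hlb : ∀ i, p i - t i ≤ f i := by
    intro i
    simp only [hf]
    by_cases hpi : 0 < p i
    · simp only [if_pos hpi]
      have hti := habs i hpi
      have h : Real.log (t i / p i) ≤ t i / p i - 1 :=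
        Real.log_le_sub_one_of_pos (div_pos hti hpi)
      have h2 : Real.log (p i / t i) = - Real.log (t i / p i) := by
        rw [← Real.log_inv, inv_div]
      have h3 : 1 - t i / p i ≤ Real.log (p i / t i) := by rw [h2]; linarith
      have h4 : p i * (1 - t i / p i) ≤ p i * Real.log (p i / t i) :=
        mul_le_mul_of_nonneg_left h3 hpi.le
      have h5 : p i * (1 - t i / p i) = p i - t i := by field_simp
      linarith [h4, h5.symm.le]
    · simp only [if_neg hpi]
      have : p i = 0 := le_antisymm (not_lt.mp hpi) (hp.1 i)
      have := ht.1 i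
      linarith
  -- summability
  have hps : Summable p := hp.2.summable
  have hts : Summable t := ht.2.summable
  have hgs : Summable g := by
    apply Summable.of_nonneg_of_le (fun i => le_max_right _ _) _ hps
    intro i
    have h1 := ht.1 i
    have h2 := hp.1 i
    exact max_le (by linarith) h2
  have hCgs : Summable (fun i => C * g i) := hgs.mul_left C
  have hfs : Summable f := by
    apply Summable.of_abs
    refine Summable.of_nonneg_of_le (fun i => abs_nonneg _) (fun i => ?_) (hCgs.add hts)
    rw [abs_le]
    have hgi : 0 ≤ C * g i := mul_nonneg hC0 (le_max_right _ _)
    constructor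
    · have := hlb i
      have := ht.1 i
      have := hp.1 i
      linarith
    · have := hfg i
      have := ht.1 i
      linarith
  -- sum of p - t is 0
  have hsub : HasSum (fun i => p i - t i) 0 := by
    have h := hp.2.sub ht.2
    rwa [sub_self] at h
  -- |p i - t i| = 2 * g i - (p i - t i)
  have habs_eq : ∀ i, |p i - t i| = 2 * g i - (p i - t i) := by
    intro i
    simp only [hg]
    rcases le_or_gt (t i) (p i) with h | h
    · rw [abs_of_nonneg (by linarith), max_eq_left (by linarith)]; ring
    · rw [abs_of_neg (by linarith), max_eq_right (by linarith)]; ring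
  have hvd : vd p t = 2 * ∑' i, g i := by
    unfold vd
    calc (∑' i, |p i - t i|) = ∑' i, (2 * g i - (p i - t i)) := by
          exact tsum_congr habs_eq
      _ = (∑' i, 2 * g i) - ∑' i, (p i - t i) :=
          Summable.tsum_sub (hgs.mul_left 2) hsub.summable
      _ = 2 * ∑' i, g i := by rw [hsub.tsum_eq, tsum_mul_left]; ring
  have hmain : kl p t ≤ C * ∑' i, g i := by
    unfold kl
    calc (∑' i, f i) ≤ ∑' i, C * g i := Summable.tsum_le_tsum hfg hfs hCgs
      _ = C * ∑' i, g i := tsum_mul_left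
  calc kl p t ≤ C * ∑' i, g i := hmain
    _ = (1 / 2) * C * (2 * ∑' i, g i) := by ring
    _ = (1 / 2) * C * vd p t := by rw [hvd]
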